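/- The number of 132-avoiding permutations of length n with exactly k left-to-right minima equals the Narayana number (1/n)·binomial(n, k)·binomial(n, k-1), for 1 ≤ k ≤ n. -/

import Mathlib

/-- `π i` is a left-to-right minimum of `π`. -/
def IsLRMin {n : ℕ} (π : Equiv.Perm (Fin n)) (i : Fin n) : Prop :=
  ∀ j, j < i → π i < π j

/-- `π` avoids the pattern 132. -/
def Avoids132 {n : ℕ} (π : Equiv.Perm (Fin n)) : Prop :=
  ¬ ∃ i j k : Fin n, i < j ∧ j < k ∧ π i < π k ∧ π k < π j

open Finset

instance {n : ℕ} (π : Equiv.Perm (Fin n)) : DecidablePred (IsLRMin π) := fun i =>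
  decidable_of_iff (∀ j, j < i → π i < π j) Iff.rfl

lemma exists_lrmin_le {n : ℕ} (π : Equiv.Perm (Fin n)) (u : Fin n) :
    ∃ p, p ≤ u ∧ IsLRMin π p ∧ π p ≤ π u := by
  obtain ⟨p, hp, hmin⟩ := (Iic u).exists_min_image π ⟨u, mem_Iic.2 le_rfl⟩
  refine ⟨p, mem_Iic.1 hp, fun j hj => ?_, hmin u (mem_Iic.2 le_rfl)⟩
  have h1 : π p ≤ π j := hmin j (mem_Iic.2 (le_trans hj.le (mem_Iic.1 hp)))
  have h2 : π p ≠ π j := fun h => absurd (π.injective h) (ne_of_lt hj).symm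
  exact lt_of_le_of_ne h1 h2

lemma not_lrmin_iff {n : ℕ} (π : Equiv.Perm (Fin n)) (u : Fin n) :
    ¬ IsLRMin π u ↔ ∃ j, j < u ∧ π j < π u := by
  unfold IsLRMin
  push_neg
  constructor
  · rintro ⟨j, hj, hle⟩
    exact ⟨j, hj, lt_of_le_of_ne hle (fun h => absurd (π.injective h) (ne_of_lt hj))⟩
  · rintro ⟨j, hj, hlt⟩; exact ⟨j, hj, hlt.le⟩

lemma avoid_greedy {n : ℕ} {π : Equiv.Perm (Fin n)} (h : Avoids132 π) {u m : Fin n}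
    (hne : ∀ w, w < u → π w ≠ m) (hgt : ∃ p, p < u ∧ π p < m) : π u ≤ m := by
  by_contra hc
  push_neg at hc
  obtain ⟨p, hpu, hpm⟩ := hgt
  set w := π.symm m with hw
  have hπw : π w = m := π.apply_symm_apply m
  have huw : u < w := by
    rcases lt_trichotomy w u with h1 | h1 | h1
    · exact absurd hπw (hne w h1)
    · rw [h1] at hπw; exact absurd hπw (ne_of_gt hc)
    · exact h1
  exact h ⟨p, u, w, hpu, huw, by rw [hπw]; exact hpm, by rw [hπw]; exact hc⟩

lemma perm_eq_of_lrmin_eq {n : ℕ} {π σ : Equiv.Perm (Fin n)}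
    (hπ : Avoids132 π) (hσ : Avoids132 σ)
    (hiff : ∀ u, IsLRMin π u ↔ IsLRMin σ u)
    (hval : ∀ u, IsLRMin π u → π u = σ u) : π = σ := by
  have key : ∀ N : ℕ, ∀ u : Fin n, (u : ℕ) < N → π u = σ u := by
    intro N
    induction N with
    | zero => exact fun u hu => absurd hu (Nat.not_lt_zero _)
    | succ N ihN =>
      intro u _hu
      by_cases hm : IsLRMin π u
      · exact hval u hm
      · have hmσ : ¬ IsLRMin σ u := fun h => hm ((hiff u).2 h)
        obtain ⟨j, hju, hjlt⟩ := (not_lrmin_iff π u).1 hm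
        obtain ⟨j', hju', hjlt'⟩ := (not_lrmin_iff σ u).1 hmσ
        have ihj : ∀ w : Fin n, w < u → π w = σ w := fun w hw =>
          ihN w (lt_of_lt_of_le hw (by omega))
        have h1 : σ u ≤ π u := by
          apply avoid_greedy hσ
          · intro w hw hc
            rw [← ihj w hw] at hc
            exact (ne_of_lt hw) (π.injective hc)
          · exact ⟨j, hju, by rw [← ihj j hju]; exact hjlt⟩
        have h2 : π u ≤ σ u := by
          apply avoid_greedy hπ
          · intro w hw hc
            rw [ihj w hw] at hc
            exact (ne_of_lt hw) (σ.injective hc)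
          · exact ⟨j', hju', by rw [ihj j' hju']; exact hjlt'⟩
        exact le_antisymm h2 h1
  exact Equiv.ext fun u => key ((u : ℕ) + 1) u (Nat.lt_succ_self _)

noncomputable def gre {n k : ℕ} (s v : Fin k → Fin n) : ℕ → ℕ
  | t =>
    if h : ∃ i, (s i : ℕ) = t then (v h.choose : ℕ)
    else sInf {m : ℕ | (∀ u, ∀ _hu : u < t, gre s v u ≠ m) ∧
      sInf {x : ℕ | ∃ u, ∃ _hu : u < t, gre s v u = x} < m}
  termination_by t => t

lemma gre_min {n k : ℕ} (s v : Fin k → Fin n) (hinj : Function.Injective s) (i : Fin k) :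
    gre s v (s i) = v i := by
  rw [gre]
  have h : ∃ j, (s j : ℕ) = (s i : ℕ) := ⟨i, rfl⟩
  rw [dif_pos h]
  have h2 := h.choose_spec
  have h3 : h.choose = i := hinj (Fin.val_injective h2)
  rw [h3]

lemma gre_nonmin {n k : ℕ} (s v : Fin k → Fin n) (t : ℕ) (h : ¬ ∃ i, (s i : ℕ) = t) :
    gre s v t = sInf {m : ℕ | (∀ u, u < t → gre s v u ≠ m) ∧
      sInf {x : ℕ | ∃ u, u < t ∧ gre s v u = x} < m} := by
  rw [gre, dif_neg h]
  congr 1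
  ext m
  constructor
  · rintro ⟨h1, h2⟩
    refine ⟨fun u hu => h1 u hu, ?_⟩
    convert h2 using 2
    ext x
    exact ⟨fun ⟨u, hu, he⟩ => ⟨u, hu, he⟩, fun ⟨u, hu, he⟩ => ⟨u, hu, he⟩⟩
  · rintro ⟨h1, h2⟩
    refine ⟨fun u hu => h1 u hu, ?_⟩
    convert h2 using 2
    ext x
    exact ⟨fun ⟨u, hu, he⟩ => ⟨u, hu, he⟩, fun ⟨u, hu, he⟩ => ⟨u, hu, he⟩⟩

section Greedy

open Finset

noncomputable def cidx {n k : ℕ} (s : Fin k → Fin n) (hs0 : ∃ i, (s i : ℕ) = 0) (t : ℕ) : Fin k :=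
  (univ.filter (fun i => (s i : ℕ) ≤ t)).max' ⟨hs0.choose, by
    simp only [mem_filter, mem_univ, true_and, hs0.choose_spec]; omega⟩

lemma cidx_le {n k : ℕ} (s : Fin k → Fin n) (hs0 : ∃ i, (s i : ℕ) = 0) (t : ℕ) : (s (cidx s hs0 t) : ℕ) ≤ t :=
  (mem_filter.1 ((univ.filter (fun i => (s i : ℕ) ≤ t)).max'_mem _)).2

lemma le_cidx {n k : ℕ} (s : Fin k → Fin n) (hs0 : ∃ i, (s i : ℕ) = 0) (t : ℕ) (i : Fin k) (hi : (s i : ℕ) ≤ t) : i ≤ cidx s hs0 t :=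
  Finset.le_max' _ i (mem_filter.2 ⟨mem_univ _, hi⟩)

lemma cidx_mono {n k : ℕ} (s : Fin k → Fin n) (hs0 : ∃ i, (s i : ℕ) = 0) {t t' : ℕ} (h : t ≤ t') : cidx s hs0 t ≤ cidx s hs0 t' :=
  le_cidx s hs0 t' _ (le_trans (cidx_le s hs0 t) h)

lemma cidx_s {n k : ℕ} {s : Fin k → Fin n} (hs : StrictMono s) (hs0 : ∃ i, (s i : ℕ) = 0) (i : Fin k) : cidx s hs0 (s i) = i := by
  refine le_antisymm (Finset.max'_le _ _ _ fun j hj => ?_) (le_cidx s hs0 _ i le_rfl)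
  have := (mem_filter.1 hj).2
  exact hs.le_iff_le.1 this

lemma sInfP_aux {n k : ℕ} {s v : Fin k → Fin n} (hs : StrictMono s) (hv : StrictAnti v) (hs0 : ∃ i, (s i : ℕ) = 0) (t : ℕ) (h : ¬ ∃ i, (s i : ℕ) = t)
    (hN : ∀ u, u < t → (¬ ∃ i, (s i : ℕ) = u) → (v (cidx s hs0 u) : ℕ) < gre s v u) :
    sInf {x : ℕ | ∃ u, u < t ∧ gre s v u = x} = v (cidx s hs0 t) := by
  have hlt : (s (cidx s hs0 t) : ℕ) < t :=
    lt_of_le_of_ne (cidx_le s hs0 t) (fun he => h ⟨_, he⟩)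
  have hmem : (v (cidx s hs0 t) : ℕ) ∈ {x : ℕ | ∃ u, u < t ∧ gre s v u = x} :=
    ⟨s (cidx s hs0 t), hlt, gre_min s v hs.injective _⟩
  refine le_antisymm (Nat.sInf_le hmem) (le_csInf ⟨_, hmem⟩ ?_)
  rintro x ⟨u, hu, rfl⟩
  by_cases hm : ∃ i, (s i : ℕ) = u
  · obtain ⟨i, hi⟩ := hm
    rw [← hi, gre_min s v hs.injective i]
    have : i ≤ cidx s hs0 t := le_cidx s hs0 t i (by omega)
    exact_mod_cast hv.antitone this
  · have h1 := hN u hu hm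
    have h2 : cidx s hs0 u ≤ cidx s hs0 t := cidx_mono s hs0 (le_of_lt hu)
    have h3 : (v (cidx s hs0 t) : ℕ) ≤ v (cidx s hs0 u) := by exact_mod_cast hv.antitone h2
    omega

lemma gre_master {n k : ℕ} {s v : Fin k → Fin n} (hs : StrictMono s) (hv : StrictAnti v) (hs0 : ∃ i, (s i : ℕ) = 0) (hv0 : ∃ i, (v i : ℕ) = 0) (hdom : ∀ i j : Fin k, (i : ℕ) + 1 = (j : ℕ) → (v i : ℕ) + (s j : ℕ) ≤ n) : ∀ t, t ≤ n →
    (∀ u, u < t → gre s v u < n) ∧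
    (∀ u u', u' < u → u < t → gre s v u ≠ gre s v u') ∧
    (∀ u, u < t → (¬ ∃ i, (s i : ℕ) = u) → (v (cidx s hs0 u) : ℕ) < gre s v u) := by
  intro t
  induction t with
  | zero => exact fun _ => ⟨fun u hu => absurd hu (Nat.not_lt_zero _),
      fun u u' _ hu => absurd hu (Nat.not_lt_zero _),
      fun u hu => absurd hu (Nat.not_lt_zero _)⟩
  | succ t ih =>
    intro ht
    obtain ⟨B, I, N⟩ := ih (by omega)
    have Ht : gre s v t < n ∧ (∀ u', u' < t → gre s v t ≠ gre s v u') ∧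
        ((¬ ∃ i, (s i : ℕ) = t) → (v (cidx s hs0 t) : ℕ) < gre s v t) := by
      by_cases h : ∃ i, (s i : ℕ) = t
      · obtain ⟨i, hi⟩ := h
        have hgt : gre s v t = v i := by rw [← hi]; exact gre_min s v hs.injective i
        refine ⟨by rw [hgt]; exact (v i).isLt, fun u' hu' => ?_, fun h' => absurd ⟨i, hi⟩ h'⟩
        rw [hgt]
        by_cases h' : ∃ j, (s j : ℕ) = u'
        · obtain ⟨j, hj⟩ := h'
          rw [← hj, gre_min s v hs.injective j]
          have : j ≠ i := fun he => by rw [he] at hj; omega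
          exact fun he => this (hv.injective (Fin.val_injective he).symm)
        · have h1 := N u' hu' h'
          have h2 : cidx s hs0 u' < i := by
            have := cidx_le s hs0 u'
            exact hs.lt_iff_lt.1 (by omega)
          have h3 : (v i : ℕ) < v (cidx s hs0 u') := by exact_mod_cast hv h2
          omega
      · -- non-minimum position: greedy step
        have hsInfP := sInfP_aux hs hv hs0 t h N
        set istar := cidx s hs0 t with histar
        -- counting: find m0 < n available
        have hP'card : ((range t).image (gre s v)).card = t := by
          rw [card_image_of_injOn, card_range]
          intro a ha b hb hab
          simp only [coe_range, Set.mem_Iio] at ha hb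
          by_contra hne
          rcases lt_or_gt_of_ne hne with h1 | h1
          · exact I b a h1 hb hab.symm
          · exact I a b h1 ha hab
        have hvmem : (v istar : ℕ) ∈ (range t).image (gre s v) := by
          refine mem_image.2 ⟨s istar, mem_range.2 ?_, gre_min s v hs.injective _⟩
          exact lt_of_le_of_ne (cidx_le s hs0 t) (fun he => h ⟨_, he⟩)
        have hvt : (v istar : ℕ) + t < n := by
          by_cases hk2 : ∃ j : Fin k, (j : ℕ) = (istar : ℕ) + 1
          · obtain ⟨j, hj⟩ := hk2
            have hsj : t < (s j : ℕ) := by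
              by_contra hc
              push_neg at hc
              have := le_cidx s hs0 t j hc
              omega
            have := hdom istar j hj.symm
            omega
          · have htop : ∀ j : Fin k, j ≤ istar := by
              intro j
              by_contra hc
              push_neg at hc
              have : (istar : ℕ) + 1 ≤ (j : ℕ) := hc
              have hlt : (istar : ℕ) + 1 < k := lt_of_le_of_lt this j.isLt
              exact hk2 ⟨⟨(istar : ℕ) + 1, hlt⟩, rfl⟩
            obtain ⟨iz, hiz⟩ := hv0
            have : iz = istar := by
              refine le_antisymm (htop iz) ?_
              by_contra hc
              push_neg at hc
              have := hv hc
              omega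
            rw [← this]
            omega
        -- the set of available values in (v istar, n) is nonempty
        have hsub : Ioo (v istar : ℕ) n ∩ (range t).image (gre s v) ⊆
            ((range t).image (gre s v)).erase (v istar : ℕ) := by
          intro x hx
          rw [mem_inter, mem_Ioo] at hx
          exact mem_erase.2 ⟨by omega, hx.2⟩
        have hcard2 : (Ioo (v istar : ℕ) n ∩ (range t).image (gre s v)).card ≤ t - 1 := by
          calc _ ≤ (((range t).image (gre s v)).erase (v istar : ℕ)).card := card_le_card hsub
            _ = t - 1 := by rw [card_erase_of_mem hvmem, hP'card]
        have hne : (Ioo (v istar : ℕ) n \ (range t).image (gre s v)).Nonempty := by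
          rw [← card_pos]
          have h1 := card_sdiff_add_card_inter (Ioo (v istar : ℕ) n) ((range t).image (gre s v))
          rw [Nat.card_Ioo] at h1
          have ht0 : t ≠ 0 := by
            obtain ⟨i0, hi0⟩ := hs0
            exact fun he => h ⟨i0, by omega⟩
          omega
        obtain ⟨m0, hm0⟩ := hne
        rw [mem_sdiff, mem_Ioo] at hm0
        have hm0T : m0 ∈ {m : ℕ | (∀ u, u < t → gre s v u ≠ m) ∧
            sInf {x : ℕ | ∃ u, u < t ∧ gre s v u = x} < m} := by
          refine ⟨fun u hu he => hm0.2 (mem_image.2 ⟨u, mem_range.2 hu, he⟩), ?_⟩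
          rw [hsInfP]
          exact hm0.1.1
        have hneT : {m : ℕ | (∀ u, u < t → gre s v u ≠ m) ∧
            sInf {x : ℕ | ∃ u, u < t ∧ gre s v u = x} < m}.Nonempty := ⟨m0, hm0T⟩
        have hgmem := Nat.sInf_mem hneT
        rw [← gre_nonmin s v t h] at hgmem
        have hgle : gre s v t ≤ m0 := by
          rw [gre_nonmin s v t h]
          exact Nat.sInf_le hm0T
        refine ⟨by omega, fun u' hu' he => hgmem.1 u' hu' he.symm, fun _ => ?_⟩
        rw [← hsInfP]
        exact hgmem.2
    refine ⟨fun u hu => ?_, fun u u' hu' hu => ?_, fun u hu hm => ?_⟩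
    · rcases Nat.lt_succ_iff_lt_or_eq.1 hu with h1 | h1
      · exact B u h1
      · rw [h1]; exact Ht.1
    · rcases Nat.lt_succ_iff_lt_or_eq.1 hu with h1 | h1
      · exact I u u' hu' h1
      · rw [h1]; exact Ht.2.1 u' (h1 ▸ hu')
    · rcases Nat.lt_succ_iff_lt_or_eq.1 hu with h1 | h1
      · exact N u h1 hm
      · rw [h1]; exact Ht.2.2 (h1 ▸ hm)

end Greedy

lemma greedy_exists {n k : ℕ} {s v : Fin k → Fin n} (hs : StrictMono s) (hv : StrictAnti v)
    (hs0 : ∃ i, (s i : ℕ) = 0) (hv0 : ∃ i, (v i : ℕ) = 0)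
    (hdom : ∀ i j : Fin k, (i : ℕ) + 1 = (j : ℕ) → (v i : ℕ) + (s j : ℕ) ≤ n) :
    ∃ π : Equiv.Perm (Fin n), Avoids132 π ∧ (∀ u : Fin n, IsLRMin π u ↔ ∃ i, s i = u) ∧
      ∀ i, π (s i) = v i := by
  obtain ⟨B, I, N⟩ := gre_master hs hv hs0 hv0 hdom n le_rfl
  set p : Fin n → Fin n := fun u => ⟨gre s v u, B u u.isLt⟩ with hp
  have hinj : Function.Injective p := by
    intro a b hab
    have hval : gre s v (a : ℕ) = gre s v (b : ℕ) := congrArg Fin.val hab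
    by_contra hne
    have hne' : (a : ℕ) ≠ (b : ℕ) := fun h => hne (Fin.val_injective h)
    rcases lt_or_gt_of_ne hne' with h1 | h1
    · exact I b a h1 b.isLt hval.symm
    · exact I a b h1 a.isLt hval
  set π : Equiv.Perm (Fin n) := Equiv.ofBijective p (Finite.injective_iff_bijective.1 hinj)
    with hπdef
  have hπ : ∀ u : Fin n, (π u : ℕ) = gre s v u := fun u => rfl
  have hval : ∀ i, π (s i) = v i := by
    intro i
    apply Fin.val_injective
    rw [hπ, gre_min s v hs.injective i]
  have hminiff : ∀ u : Fin n, IsLRMin π u ↔ ∃ i, s i = u := by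
    intro u
    constructor
    · intro hmin
      by_contra hc
      have hcn : ¬ ∃ i, (s i : ℕ) = (u : ℕ) := fun ⟨i, hi⟩ => hc ⟨i, Fin.val_injective hi⟩
      have h1 := N u u.isLt hcn
      have h2 : (s (cidx s hs0 u) : ℕ) < (u : ℕ) :=
        lt_of_le_of_ne (cidx_le s hs0 u) (fun he => hcn ⟨_, he⟩)
      have h3 := hmin (s (cidx s hs0 u)) (by rw [Fin.lt_def]; exact h2)
      rw [Fin.lt_def, hπ, hπ, gre_min s v hs.injective] at h3
      omega
    · rintro ⟨i, rfl⟩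
      intro j hj
      rw [Fin.lt_def, hπ, hπ, gre_min s v hs.injective i]
      rw [Fin.lt_def] at hj
      by_cases hm : ∃ jj, (s jj : ℕ) = (j : ℕ)
      · obtain ⟨jj, hjj⟩ := hm
        have : gre s v (j : ℕ) = v jj := by rw [← hjj]; exact gre_min s v hs.injective jj
        rw [this]
        have : jj < i := hs.lt_iff_lt.1 (by rw [Fin.lt_def]; omega)
        exact_mod_cast hv this
      · have h1 := N j j.isLt hm
        have h2 : cidx s hs0 (j : ℕ) < i := by
          have h3 := cidx_le s hs0 (j : ℕ)
          exact hs.lt_iff_lt.1 (by rw [Fin.lt_def]; omega)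
        have h4 : (v i : ℕ) < v (cidx s hs0 (j : ℕ)) := by exact_mod_cast hv h2
        omega
  refine ⟨π, ?_, hminiff, hval⟩
  rintro ⟨a, b, w, hab, hbw, h1, h2⟩
  rw [Fin.lt_def, hπ, hπ] at h1 h2
  have hbmin : ¬ ∃ i, (s i : ℕ) = (b : ℕ) := by
    rintro ⟨i, hi⟩
    have : IsLRMin π b := (hminiff b).2 ⟨i, Fin.val_injective hi⟩
    have := this a hab
    rw [Fin.lt_def, hπ, hπ] at this
    omega
  have hN' : ∀ u, u < (b : ℕ) → (¬ ∃ i, (s i : ℕ) = u) → (v (cidx s hs0 u) : ℕ) < gre s v u :=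
    fun u hu hm => N u (lt_trans hu b.isLt) hm
  have hsinf := sInfP_aux hs hv hs0 (b : ℕ) hbmin hN'
  have hLa : (v (cidx s hs0 (a : ℕ)) : ℕ) ≤ gre s v (a : ℕ) := by
    by_cases hm : ∃ i, (s i : ℕ) = (a : ℕ)
    · obtain ⟨i, hi⟩ := hm
      have e1 : gre s v (a : ℕ) = v i := by rw [← hi]; exact gre_min s v hs.injective i
      have e2 : cidx s hs0 (a : ℕ) = i := by rw [← hi]; exact cidx_s hs hs0 i
      rw [e1, e2]
    · exact le_of_lt (N (a : ℕ) a.isLt hm)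
  have hmono : cidx s hs0 (a : ℕ) ≤ cidx s hs0 (b : ℕ) :=
    cidx_mono s hs0 (le_of_lt (Fin.lt_def.1 hab))
  have hvv : (v (cidx s hs0 (b : ℕ)) : ℕ) ≤ v (cidx s hs0 (a : ℕ)) := by
    exact_mod_cast hv.antitone hmono
  have hle : gre s v (b : ℕ) ≤ gre s v (w : ℕ) := by
    rw [gre_nonmin s v (b : ℕ) hbmin]
    refine Nat.sInf_le ⟨fun u hu he => ?_, by rw [hsinf]; omega⟩
    exact I (w : ℕ) u (lt_trans hu (Fin.lt_def.1 hbw)) w.isLt he.symm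
  omega

def GoodPair (n k : ℕ) (p : (Fin k → Fin n) × (Fin k → Fin n)) : Prop :=
  StrictMono p.1 ∧ StrictAnti p.2 ∧ (∃ i, (p.1 i : ℕ) = 0) ∧ (∃ i, (p.2 i : ℕ) = 0) ∧
    ∀ i j : Fin k, (i : ℕ) + 1 = (j : ℕ) → (p.2 i : ℕ) + (p.1 j : ℕ) ≤ n

open Finset in
lemma minset_card {n k : ℕ} (π : Equiv.Perm (Fin n))
    (hc : Nat.card {i : Fin n // IsLRMin π i} = k) :
    (univ.filter (IsLRMin π)).card = k := by
  rw [← hc, Nat.card_eq_fintype_card, Fintype.card_subtype]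

open Finset in
lemma zero_lrmin {n : ℕ} (π : Equiv.Perm (Fin n)) (hn : 0 < n) : IsLRMin π ⟨0, hn⟩ :=
  fun j hj => absurd (Fin.lt_def.1 hj) (Nat.not_lt_zero _)

open Finset in
lemma goodpair_of {n k : ℕ} (hn : 0 < n) (π : Equiv.Perm (Fin n)) (hA : Avoids132 π)
    (hc : Nat.card {i : Fin n // IsLRMin π i} = k) :
    GoodPair n k ((fun i => (univ.filter (IsLRMin π)).orderEmbOfFin (minset_card π hc) i),
      (fun i => π ((univ.filter (IsLRMin π)).orderEmbOfFin (minset_card π hc) i))) := by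
  set e := (univ.filter (IsLRMin π)).orderEmbOfFin (minset_card π hc) with he
  have hmem : ∀ i, IsLRMin π (e i) := fun i =>
    (mem_filter.1 (Finset.orderEmbOfFin_mem _ _ i)).2
  have hrange : ∀ u : Fin n, IsLRMin π u → ∃ i, e i = u := by
    intro u hu
    have : u ∈ Set.range e := by
      rw [he, Finset.range_orderEmbOfFin]
      exact mem_coe.2 (mem_filter.2 ⟨mem_univ _, hu⟩)
    exact this
  have hanti : StrictAnti (fun i => π (e i)) := by
    intro i j hij
    exact hmem j (e i) (e.strictMono hij)
  refine ⟨e.strictMono, hanti, ?_, ?_, ?_⟩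
  · obtain ⟨i, hi⟩ := hrange ⟨0, hn⟩ (zero_lrmin π hn)
    exact ⟨i, by show (e i : ℕ) = 0; rw [hi]⟩
  · have hp0 : IsLRMin π (π.symm ⟨0, hn⟩) := by
      intro j hj
      rw [π.apply_symm_apply]
      have h1 : π j ≠ ⟨0, hn⟩ := fun h => (ne_of_lt hj)
        (by rw [← π.symm_apply_apply j, h])
      have h2 : (π j : ℕ) ≠ 0 := fun h => h1 (Fin.val_injective h)
      show (⟨0, hn⟩ : Fin n) < π j
      rw [Fin.lt_def]
      show 0 < (π j : ℕ)
      omega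
    obtain ⟨i, hi⟩ := hrange _ hp0
    refine ⟨i, ?_⟩
    show (π (e i) : ℕ) = 0
    rw [hi, π.apply_symm_apply]
  · intro i j hij
    show (π (e i) : ℕ) + (e j : ℕ) ≤ n
    have key : ∀ u : Fin n, u < e j → π (e i) ≤ π u := by
      intro u hu
      obtain ⟨q, hqu, hqmin, hqle⟩ := exists_lrmin_le π u
      obtain ⟨i', hi'⟩ := hrange q hqmin
      have hi'j : i' < j := by
        rw [← e.lt_iff_lt]
        exact lt_of_le_of_lt (hi' ▸ hqu) hu
      have hi'i : i' ≤ i := by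
        have : (i' : ℕ) < (i : ℕ) + 1 := hij ▸ hi'j
        exact Fin.le_def.2 (by omega)
      calc π (e i) ≤ π (e i') := hanti.antitone hi'i
        _ = π q := by rw [hi']
        _ ≤ π u := hqle
    have hsub : (Finset.Iio (e j)).image π ⊆ Finset.Ici (π (e i)) := by
      intro x hx
      obtain ⟨u, hu, rfl⟩ := mem_image.1 hx
      exact mem_Ici.2 (key u (mem_Iio.1 hu))
    have hcard : ((Finset.Iio (e j)).image π).card = (e j : ℕ) := by
      rw [Finset.card_image_of_injective _ π.injective, Fin.card_Iio]
    have hcard2 := Finset.card_le_card hsub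
    rw [hcard, Fin.card_Ici] at hcard2
    have := (π (e i)).isLt
    omega

open Finset in
noncomputable def toGP {n k : ℕ} (hn : 0 < n)
    (x : {π : Equiv.Perm (Fin n) // Avoids132 π ∧ Nat.card {i : Fin n // IsLRMin π i} = k}) :
    {p : (Fin k → Fin n) × (Fin k → Fin n) // GoodPair n k p} :=
  ⟨((fun i => (univ.filter (IsLRMin x.1)).orderEmbOfFin (minset_card x.1 x.2.2) i),
    (fun i => x.1 ((univ.filter (IsLRMin x.1)).orderEmbOfFin (minset_card x.1 x.2.2) i))),
    goodpair_of hn x.1 x.2.1 x.2.2⟩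

open Finset in
lemma toGP_bijective {n k : ℕ} (hn : 0 < n) : Function.Bijective (toGP (n := n) (k := k) hn) := by
  constructor
  · rintro ⟨π, hAπ, hcπ⟩ ⟨σ, hAσ, hcσ⟩ hxy
    have hpair := congrArg Subtype.val hxy
    have hfst := congrArg Prod.fst hpair
    have hsnd := congrArg Prod.snd hpair
    simp only [toGP] at hfst hsnd
    set eπ := (univ.filter (IsLRMin π)).orderEmbOfFin (minset_card π hcπ) with heπ
    set eσ := (univ.filter (IsLRMin σ)).orderEmbOfFin (minset_card σ hcσ) with heσ
    have hsets : univ.filter (IsLRMin π) = univ.filter (IsLRMin σ) := by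
      apply Finset.coe_injective
      rw [← Finset.range_orderEmbOfFin _ (minset_card π hcπ),
        ← Finset.range_orderEmbOfFin _ (minset_card σ hcσ)]
      have : ⇑((univ.filter (IsLRMin π)).orderEmbOfFin (minset_card π hcπ))
          = ⇑((univ.filter (IsLRMin σ)).orderEmbOfFin (minset_card σ hcσ)) := by
        funext i
        exact congrFun hfst i
      rw [this]
    have hiff : ∀ u, IsLRMin π u ↔ IsLRMin σ u := by
      intro u
      constructor
      · intro h
        have : u ∈ univ.filter (IsLRMin σ) := hsets ▸ mem_filter.2 ⟨mem_univ _, h⟩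
        exact (mem_filter.1 this).2
      · intro h
        have : u ∈ univ.filter (IsLRMin π) := hsets ▸ mem_filter.2 ⟨mem_univ _, h⟩
        exact (mem_filter.1 this).2
    have hvals : ∀ u, IsLRMin π u → π u = σ u := by
      intro u hu
      have : u ∈ Set.range eπ := by
        rw [heπ, Finset.range_orderEmbOfFin]
        exact mem_coe.2 (mem_filter.2 ⟨mem_univ _, hu⟩)
      obtain ⟨i, hi⟩ := this
      have h1 : π (eπ i) = σ (eσ i) := congrFun hsnd i
      have h2 : eπ i = eσ i := congrFun hfst i
      rw [← hi, h1, h2]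
    exact Subtype.ext (perm_eq_of_lrmin_eq hAπ hAσ hiff hvals)
  · rintro ⟨⟨s, v⟩, hs, hv, hs0, hv0, hdom⟩
    obtain ⟨π, hA, hminiff, hval⟩ := greedy_exists hs hv
      (by obtain ⟨i, hi⟩ := hs0; exact ⟨i, hi⟩)
      (by obtain ⟨i, hi⟩ := hv0; exact ⟨i, hi⟩) hdom
    have hcard : Nat.card {i : Fin n // IsLRMin π i} = k := by
      have he : {i : Fin n // IsLRMin π i} ≃ Set.range s := by
        apply Equiv.subtypeEquivRight
        intro u
        rw [hminiff u]
        exact ⟨fun ⟨i, h⟩ => ⟨i, h⟩, fun ⟨i, h⟩ => ⟨i, h⟩⟩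
      rw [Nat.card_congr he, Nat.card_range_of_injective hs.injective,
        Nat.card_eq_fintype_card, Fintype.card_fin]
    refine ⟨⟨π, hA, hcard⟩, ?_⟩
    apply Subtype.ext
    have hse : s = ⇑((univ.filter (IsLRMin π)).orderEmbOfFin (minset_card π hcard)) := by
      apply Finset.orderEmbOfFin_unique
      · intro i
        exact mem_filter.2 ⟨mem_univ _, (hminiff (s i)).2 ⟨i, rfl⟩⟩
      · exact hs
    simp only [toGP]
    refine Prod.ext ?_ ?_
    · funext i
      exact (congrFun hse i).symm
    · funext i
      show π ((univ.filter (IsLRMin π)).orderEmbOfFin (minset_card π hcard) i) = v i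
      rw [← congrFun hse i, hval i]

def DomPair (m r : ℕ) (q : (Fin r → Fin m) × (Fin r → Fin m)) : Prop :=
  StrictMono q.1 ∧ StrictMono q.2 ∧ ∀ i, q.1 i ≤ q.2 i

lemma gp_s_pos {n k : ℕ} {s : Fin k → Fin n} (hs : StrictMono s) {j : Fin k} (hj : 0 < (j : ℕ)) :
    1 ≤ (s j : ℕ) := by
  have hk : 0 < k := lt_of_le_of_lt (Nat.zero_le _) j.isLt
  have := hs (show (⟨0, hk⟩ : Fin k) < j by rw [Fin.lt_def]; exact hj)
  rw [Fin.lt_def] at this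
  omega

lemma gp_v_pos {n k : ℕ} {v : Fin k → Fin n} (hv : StrictAnti v) {j : Fin k}
    (hj : (j : ℕ) < k - 1) : 1 ≤ (v j : ℕ) := by
  have hk : k - 1 < k := by omega
  have := hv (show j < (⟨k - 1, hk⟩ : Fin k) by rw [Fin.lt_def]; exact hj)
  rw [Fin.lt_def] at this
  omega

def gpToDP {n k : ℕ} (x : {p : (Fin k → Fin n) × (Fin k → Fin n) // GoodPair n k p}) :
    {q : (Fin (k-1) → Fin (n-1)) × (Fin (k-1) → Fin (n-1)) // DomPair (n-1) (k-1) q} :=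
  ⟨((fun i => ⟨(x.1.1 ⟨(i : ℕ) + 1, by omega⟩ : ℕ) - 1, by
      have h1 := gp_s_pos x.2.1 (j := ⟨(i : ℕ) + 1, by omega⟩) (by simp)
      have h2 := (x.1.1 ⟨(i : ℕ) + 1, by omega⟩).isLt
      omega⟩),
    (fun i => ⟨n - 1 - (x.1.2 ⟨(i : ℕ), by omega⟩ : ℕ), by
      have h1 := gp_v_pos x.2.2.1 (j := ⟨(i : ℕ), by omega⟩) (by simpa using i.isLt)
      have h2 := (x.1.2 ⟨(i : ℕ), by omega⟩).isLt
      omega⟩)), by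
    obtain ⟨p, hs, hv, hs0, hv0, hdom⟩ := x
    refine ⟨?_, ?_, ?_⟩
    · intro i j hij
      rw [Fin.lt_def] at hij ⊢
      simp only
      have h1 := hs (show (⟨(i : ℕ) + 1, by omega⟩ : Fin k) < ⟨(j : ℕ) + 1, by omega⟩ by
        rw [Fin.lt_def]; simpa using hij)
      rw [Fin.lt_def] at h1
      have h2 := gp_s_pos hs (j := ⟨(i : ℕ) + 1, by omega⟩) (by simp)
      omega
    · intro i j hij
      rw [Fin.lt_def] at hij ⊢
      simp only
      have h1 := hv (show (⟨(i : ℕ), by omega⟩ : Fin k) < ⟨(j : ℕ), by omega⟩ by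
        rw [Fin.lt_def]; simpa using hij)
      rw [Fin.lt_def] at h1
      have h2 := (p.2 ⟨(i : ℕ), by omega⟩).isLt
      omega
    · intro i
      rw [Fin.le_def]
      simp only
      have h1 := hdom ⟨(i : ℕ), by omega⟩ ⟨(i : ℕ) + 1, by omega⟩ rfl
      have h2 := gp_s_pos hs (j := ⟨(i : ℕ) + 1, by omega⟩) (by simp)
      have h3 := gp_v_pos hv (j := ⟨(i : ℕ), by omega⟩) (by simpa using i.isLt)
      have h4 := (p.1 ⟨(i : ℕ) + 1, by omega⟩).isLt
      omega⟩

set_option maxHeartbeats 1000000 in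
lemma gpToDP_bijective {n k : ℕ} (hn : 0 < n) (hk : 0 < k) :
    Function.Bijective (gpToDP (n := n) (k := k)) := by
  constructor
  · rintro ⟨p, hgp⟩ ⟨p', hgp'⟩ hxy
    obtain ⟨hs, hv, hs0, hv0, hdom⟩ := hgp
    obtain ⟨hs', hv', hs0', hv0', hdom'⟩ := hgp'
    have hfst := congrArg (Prod.fst ∘ Subtype.val) hxy
    have hsnd := congrArg (Prod.snd ∘ Subtype.val) hxy
    simp only [gpToDP, Function.comp] at hfst hsnd
    have hz : ∀ {w : Fin k → Fin n}, StrictMono w → (∃ i, (w i : ℕ) = 0) →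
        ∀ j : Fin k, (j : ℕ) = 0 → (w j : ℕ) = 0 := by
      rintro w hw ⟨i, hi⟩ j hj
      rcases Nat.eq_zero_or_pos (i : ℕ) with h0 | h0
      · have : i = j := Fin.val_injective (by omega)
        rwa [← this]
      · have := gp_s_pos hw h0
        omega
    have hzv : ∀ {w : Fin k → Fin n}, StrictAnti w → (∃ i, (w i : ℕ) = 0) →
        ∀ j : Fin k, (j : ℕ) = k - 1 → (w j : ℕ) = 0 := by
      rintro w hw ⟨i, hi⟩ j hj
      rcases Nat.lt_or_ge (i : ℕ) (k - 1) with h0 | h0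
      · have := gp_v_pos hw h0
        omega
      · have : i = j := Fin.val_injective (by have := i.isLt; omega)
        rwa [← this]
    apply Subtype.ext
    show p = p'
    refine Prod.ext (funext fun j => ?_) (funext fun j => ?_)
    · rcases Nat.eq_zero_or_pos (j : ℕ) with h0 | h0
      · apply Fin.val_injective
        rw [hz hs hs0 j h0, hz hs' hs0' j h0]
      · have hjk : (j : ℕ) - 1 < k - 1 := by have := j.isLt; omega
        have h2 := congrArg Fin.val (congrFun hfst ⟨(j : ℕ) - 1, hjk⟩)
        simp only [Fin.val_mk] at h2
        have hid : (⟨(j : ℕ) - 1 + 1, by omega⟩ : Fin k) = j :=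
          Fin.val_injective (by simp only [Fin.val_mk]; omega)
        rw [hid] at h2
        have h3 := gp_s_pos hs h0
        have h4 := gp_s_pos hs' h0
        exact Fin.val_injective (by omega)
    · rcases Nat.lt_or_ge (j : ℕ) (k - 1) with h0 | h0
      · have h2 := congrArg Fin.val (congrFun hsnd ⟨(j : ℕ), h0⟩)
        simp only [Fin.val_mk] at h2
        have hid : (⟨(j : ℕ), by omega⟩ : Fin k) = j := Fin.val_injective rfl
        rw [hid] at h2
        have h3 := (p.2 j).isLt
        have h4 := (p'.2 j).isLt
        exact Fin.val_injective (by omega)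
      · apply Fin.val_injective
        rw [hzv hv hv0 j (by have := j.isLt; omega), hzv hv' hv0' j (by have := j.isLt; omega)]
  · rintro ⟨q, hq⟩
    obtain ⟨ha, hc, hdomq⟩ := hq
    refine ⟨⟨((fun j => if h : (j : ℕ) = 0 then ⟨0, hn⟩ else
        ⟨(q.1 ⟨(j : ℕ) - 1, by have := j.isLt; omega⟩ : ℕ) + 1, by
          have := (q.1 ⟨(j : ℕ) - 1, by have := j.isLt; omega⟩).isLt; omega⟩),
      (fun j => if h : (j : ℕ) = k - 1 then ⟨0, hn⟩ else
        ⟨n - 1 - (q.2 ⟨(j : ℕ), by have := j.isLt; omega⟩ : ℕ), by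
          have := (q.2 ⟨(j : ℕ), by have := j.isLt; omega⟩).isLt; omega⟩)),
      ?_, ?_, ?_, ?_, ?_⟩, ?_⟩
    · intro i j hij
      rw [Fin.lt_def] at hij
      dsimp only
      by_cases h1 : (i : ℕ) = 0
      · rw [dif_pos h1, dif_neg (by omega)]
        rw [Fin.lt_def]
        simp
      · rw [dif_neg h1, dif_neg (by omega)]
        rw [Fin.lt_def]
        simp only [Fin.val_mk]
        have := ha (show (⟨(i : ℕ) - 1, by have := i.isLt; omega⟩ : Fin (k-1)) <
          ⟨(j : ℕ) - 1, by have := j.isLt; omega⟩ by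
            rw [Fin.lt_def]; simp only [Fin.val_mk]; omega)
        rw [Fin.lt_def] at this
        omega
    · intro i j hij
      rw [Fin.lt_def] at hij
      dsimp only
      by_cases h1 : (j : ℕ) = k - 1
      · rw [dif_pos h1, dif_neg (by omega)]
        rw [Fin.lt_def]
        simp only [Fin.val_mk]
        have h2 := (q.2 ⟨(i : ℕ), by have := i.isLt; omega⟩).isLt
        omega
      · rw [dif_neg h1, dif_neg (by have := j.isLt; omega)]
        rw [Fin.lt_def]
        simp only [Fin.val_mk]
        have h3 := hc (show (⟨(i : ℕ), by have := j.isLt; omega⟩ : Fin (k-1)) <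
          ⟨(j : ℕ), by have := j.isLt; omega⟩ by
            rw [Fin.lt_def]; simp only [Fin.val_mk]; omega)
        rw [Fin.lt_def] at h3
        have h2 := (q.2 ⟨(j : ℕ), by have := j.isLt; omega⟩).isLt
        have h4 := (q.2 ⟨(i : ℕ), by have := j.isLt; omega⟩).isLt
        omega
    · exact ⟨⟨0, hk⟩, by dsimp only; rw [dif_pos rfl]⟩
    · exact ⟨⟨k - 1, by omega⟩, by dsimp only; rw [dif_pos rfl]⟩
    · intro i j hij
      dsimp only
      rw [dif_neg (show ¬(i : ℕ) = k - 1 by omega), dif_neg (show ¬(j : ℕ) = 0 by omega)]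
      simp only [Fin.val_mk]
      have hidx : (⟨(j : ℕ) - 1, by have := j.isLt; omega⟩ : Fin (k-1)) =
          (⟨(i : ℕ), by omega⟩ : Fin (k-1)) :=
        Fin.val_injective (by simp only [Fin.val_mk]; omega)
      rw [hidx]
      have h2 := hdomq ⟨(i : ℕ), by omega⟩
      rw [Fin.le_def] at h2
      have h3 := (q.2 ⟨(i : ℕ), by omega⟩).isLt
      have h5 := (q.1 ⟨(i : ℕ), by omega⟩).isLt
      omega
    · apply Subtype.ext
      refine Prod.ext (funext fun i => ?_) (funext fun i => ?_)
      · apply Fin.val_injective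
        simp only [gpToDP]
        rw [dif_neg (by omega)]
        simp only [Fin.val_mk]
        have hidx : (⟨(i : ℕ) + 1 - 1, by omega⟩ : Fin (k-1)) = i :=
          Fin.val_injective (by simp only [Fin.val_mk]; omega)
        rw [hidx]
        omega
      · apply Fin.val_injective
        simp only [gpToDP]
        rw [dif_neg (by have := i.isLt; omega)]
        simp only [Fin.val_mk]
        have hidx : (⟨(i : ℕ), by have := i.isLt; omega⟩ : Fin (k-1)) = i :=
          Fin.val_injective rfl
        rw [hidx]
        have := (q.2 i).isLt
        omega

open Finset in
lemma card_SM (m r : ℕ) : Nat.card {f : Fin r → Fin m // StrictMono f} = m.choose r := by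
  have E : {f : Fin r → Fin m // StrictMono f} ≃ {t : Finset (Fin m) // t.card = r} :=
    { toFun := fun f => ⟨univ.image f.1, by
        rw [card_image_of_injective _ f.2.injective, card_univ, Fintype.card_fin]⟩
      invFun := fun t => ⟨t.1.orderEmbOfFin t.2, (t.1.orderEmbOfFin t.2).strictMono⟩
      left_inv := by
        rintro ⟨f, hf⟩
        apply Subtype.ext
        exact (Finset.orderEmbOfFin_unique _ (fun x => mem_image_of_mem f (mem_univ x)) hf).symm
      right_inv := by
        rintro ⟨t, ht⟩
        apply Subtype.ext
        apply Finset.coe_injective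
        push_cast
        rw [Set.image_univ, Finset.range_orderEmbOfFin] }
  rw [Nat.card_congr E, Nat.card_eq_fintype_card, Fintype.card_finset_len,
    Fintype.card_fin]

instance decSM {m r : ℕ} : DecidablePred (fun f : Fin r → Fin m => StrictMono f) := fun f =>
  decidable_of_iff (∀ a b, a < b → f a < f b)
    ⟨fun h a b hab => h a b hab, fun h a b hab => h hab⟩

section Reflection

variable {m r : ℕ}

def vio (a c : Fin r → Fin m) (hex : ∃ t : ℕ, ∃ h : t < r, c ⟨t, h⟩ < a ⟨t, h⟩) : ℕ :=
  Nat.find hex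

lemma vio_lt (a c : Fin r → Fin m) (hex : ∃ t : ℕ, ∃ h : t < r, c ⟨t, h⟩ < a ⟨t, h⟩) :
    vio a c hex < r := (Nat.find_spec hex).1

lemma vio_spec (a c : Fin r → Fin m) (hex : ∃ t : ℕ, ∃ h : t < r, c ⟨t, h⟩ < a ⟨t, h⟩) :
    c ⟨vio a c hex, vio_lt a c hex⟩ < a ⟨vio a c hex, vio_lt a c hex⟩ :=
  (Nat.find_spec hex).2

lemma vio_min (a c : Fin r → Fin m) (hex : ∃ t : ℕ, ∃ h : t < r, c ⟨t, h⟩ < a ⟨t, h⟩)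
    {t : ℕ} (ht : t < vio a c hex) (htr : t < r) : a ⟨t, htr⟩ ≤ c ⟨t, htr⟩ := by
  have := Nat.find_min hex ht
  push_neg at this
  exact this htr

def fwdA (a c : Fin r → Fin m) (hex : ∃ t : ℕ, ∃ h : t < r, c ⟨t, h⟩ < a ⟨t, h⟩)
    (j : Fin (r+1)) : Fin m :=
  if h : (j : ℕ) ≤ vio a c hex then c ⟨j, by have := vio_lt a c hex; omega⟩
  else a ⟨(j : ℕ) - 1, by have := j.isLt; omega⟩

def fwdC (a c : Fin r → Fin m) (hex : ∃ t : ℕ, ∃ h : t < r, c ⟨t, h⟩ < a ⟨t, h⟩)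
    (j : Fin (r-1)) : Fin m :=
  if h : (j : ℕ) < vio a c hex then a ⟨j, by have := vio_lt a c hex; omega⟩
  else c ⟨(j : ℕ) + 1, by have := j.isLt; omega⟩

lemma fwdA_mono {a c : Fin r → Fin m} (ha : StrictMono a) (hc : StrictMono c)
    (hex : ∃ t : ℕ, ∃ h : t < r, c ⟨t, h⟩ < a ⟨t, h⟩) : StrictMono (fwdA a c hex) := by
  intro i j hij
  rw [Fin.lt_def] at hij
  unfold fwdA
  by_cases h1 : (i : ℕ) ≤ vio a c hex
  · rw [dif_pos h1]
    by_cases h2 : (j : ℕ) ≤ vio a c hex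
    · rw [dif_pos h2]
      exact hc (by rw [Fin.lt_def]; simpa using hij)
    · rw [dif_neg h2]
      calc c ⟨(i : ℕ), _⟩ ≤ c ⟨vio a c hex, vio_lt a c hex⟩ :=
            hc.monotone (by rw [Fin.le_def]; simpa using h1)
        _ < a ⟨vio a c hex, vio_lt a c hex⟩ := vio_spec a c hex
        _ ≤ a ⟨(j : ℕ) - 1, _⟩ := ha.monotone (by rw [Fin.le_def]; simp; omega)
  · rw [dif_neg h1, dif_neg (by omega)]
    exact ha (by rw [Fin.lt_def]; simp; omega)

lemma fwdC_mono {a c : Fin r → Fin m} (ha : StrictMono a) (hc : StrictMono c)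
    (hex : ∃ t : ℕ, ∃ h : t < r, c ⟨t, h⟩ < a ⟨t, h⟩) : StrictMono (fwdC a c hex) := by
  intro i j hij
  rw [Fin.lt_def] at hij
  unfold fwdC
  by_cases h2 : (j : ℕ) < vio a c hex
  · rw [dif_pos h2, dif_pos (by omega)]
    exact ha (by rw [Fin.lt_def]; simpa using hij)
  · rw [dif_neg h2]
    by_cases h1 : (i : ℕ) < vio a c hex
    · rw [dif_pos h1]
      calc a ⟨(i : ℕ), _⟩ ≤ c ⟨(i : ℕ), _⟩ := vio_min a c hex h1 _
        _ < c ⟨(j : ℕ) + 1, _⟩ := hc (by rw [Fin.lt_def]; simp; omega)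
    · rw [dif_neg h1]
      exact hc (by rw [Fin.lt_def]; simp; omega)

def oiv (A : Fin (r+1) → Fin m) (C : Fin (r-1) → Fin m) : ℕ :=
  Nat.find (⟨r - 1, Or.inl le_rfl⟩ :
    ∃ t : ℕ, r - 1 ≤ t ∨ ∃ h : t < r - 1, A ⟨t, by omega⟩ < C ⟨t, h⟩)

lemma oiv_le (A : Fin (r+1) → Fin m) (C : Fin (r-1) → Fin m) : oiv A C ≤ r - 1 :=
  Nat.find_le (Or.inl le_rfl)

lemma oiv_spec (A : Fin (r+1) → Fin m) (C : Fin (r-1) → Fin m) (h : oiv A C < r - 1) :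
    A ⟨oiv A C, by omega⟩ < C ⟨oiv A C, h⟩ := by
  unfold oiv at h ⊢
  rcases Nat.find_spec (⟨r - 1, Or.inl le_rfl⟩ :
    ∃ t : ℕ, r - 1 ≤ t ∨ ∃ h : t < r - 1, A ⟨t, by omega⟩ < C ⟨t, h⟩) with h1 | ⟨h1, h2⟩
  · omega
  · exact h2

lemma oiv_min (A : Fin (r+1) → Fin m) (C : Fin (r-1) → Fin m) {t : ℕ} (ht : t < oiv A C)
    (htr : t < r - 1) : C ⟨t, htr⟩ ≤ A ⟨t, by omega⟩ := by
  have := Nat.find_min (⟨r - 1, Or.inl le_rfl⟩ :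
    ∃ t : ℕ, r - 1 ≤ t ∨ ∃ h : t < r - 1, A ⟨t, by omega⟩ < C ⟨t, h⟩) ht
  push_neg at this
  exact this.2 htr

def bwdA (A : Fin (r+1) → Fin m) (C : Fin (r-1) → Fin m) (j : Fin r) : Fin m :=
  if h : (j : ℕ) < oiv A C then C ⟨j, by have := oiv_le A C; omega⟩
  else A ⟨(j : ℕ) + 1, by have := j.isLt; omega⟩

def bwdC (A : Fin (r+1) → Fin m) (C : Fin (r-1) → Fin m) (j : Fin r) : Fin m :=
  if h : (j : ℕ) ≤ oiv A C then A ⟨j, by have := j.isLt; omega⟩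
  else C ⟨(j : ℕ) - 1, by have := j.isLt; have := oiv_le A C; omega⟩

lemma bwdA_mono {A : Fin (r+1) → Fin m} {C : Fin (r-1) → Fin m}
    (hA : StrictMono A) (hC : StrictMono C) : StrictMono (bwdA A C) := by
  intro i j hij
  rw [Fin.lt_def] at hij
  unfold bwdA
  by_cases h2 : (j : ℕ) < oiv A C
  · rw [dif_pos h2, dif_pos (by omega)]
    exact hC (by rw [Fin.lt_def]; simpa using hij)
  · rw [dif_neg h2]
    by_cases h1 : (i : ℕ) < oiv A C
    · rw [dif_pos h1]
      have hio : (i : ℕ) < r - 1 := by have := oiv_le A C; omega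
      calc C ⟨(i : ℕ), hio⟩ ≤ A ⟨(i : ℕ), by omega⟩ := oiv_min A C h1 hio
        _ < A ⟨(j : ℕ) + 1, _⟩ := hA (by rw [Fin.lt_def]; simp; omega)
    · rw [dif_neg h1]
      exact hA (by rw [Fin.lt_def]; simp; omega)

lemma bwdC_mono {A : Fin (r+1) → Fin m} {C : Fin (r-1) → Fin m}
    (hA : StrictMono A) (hC : StrictMono C) : StrictMono (bwdC A C) := by
  intro i j hij
  rw [Fin.lt_def] at hij
  unfold bwdC
  by_cases h1 : (i : ℕ) ≤ oiv A C
  · rw [dif_pos h1]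
    by_cases h2 : (j : ℕ) ≤ oiv A C
    · rw [dif_pos h2]
      exact hA (by rw [Fin.lt_def]; simpa using hij)
    · rw [dif_neg h2]
      have hoc : oiv A C < r - 1 := by have := j.isLt; omega
      calc A ⟨(i : ℕ), _⟩ ≤ A ⟨oiv A C, by omega⟩ :=
            hA.monotone (by rw [Fin.le_def]; simpa using h1)
        _ < C ⟨oiv A C, hoc⟩ := oiv_spec A C hoc
        _ ≤ C ⟨(j : ℕ) - 1, _⟩ := hC.monotone (by rw [Fin.le_def]; simp; omega)
  · rw [dif_neg h1, dif_neg (by omega)]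
    exact hC (by rw [Fin.lt_def]; simp; omega)

lemma bwd_bad (A : Fin (r+1) → Fin m) (C : Fin (r-1) → Fin m) (hA : StrictMono A) (hr : 0 < r) :
    ∃ i : Fin r, bwdC A C i < bwdA A C i := by
  have hlt : oiv A C < r := by have := oiv_le A C; omega
  refine ⟨⟨oiv A C, hlt⟩, ?_⟩
  unfold bwdA bwdC
  rw [dif_neg (show ¬((⟨oiv A C, hlt⟩ : Fin r) : ℕ) < oiv A C by simp),
    dif_pos (show ((⟨oiv A C, hlt⟩ : Fin r) : ℕ) ≤ oiv A C by simp)]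
  exact hA (by rw [Fin.lt_def]; simp)

end Reflection

section Reflection2

set_option maxHeartbeats 1000000

variable {m r : ℕ}

lemma hex_of {a c : Fin r → Fin m} (h : ∃ i : Fin r, c i < a i) :
    ∃ t : ℕ, ∃ ht : t < r, c ⟨t, ht⟩ < a ⟨t, ht⟩ := by
  obtain ⟨i, hi⟩ := h
  exact ⟨(i : ℕ), i.isLt, by simpa [Fin.eta] using hi⟩

lemma oiv_fwd {a c : Fin r → Fin m} (hc : StrictMono c)
    (hex : ∃ t : ℕ, ∃ h : t < r, c ⟨t, h⟩ < a ⟨t, h⟩) :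
    oiv (fwdA a c hex) (fwdC a c hex) = vio a c hex := by
  have hi0r : vio a c hex < r := vio_lt a c hex
  apply le_antisymm
  · apply Nat.find_le
    by_cases h : vio a c hex < r - 1
    · refine Or.inr ⟨h, ?_⟩
      unfold fwdA fwdC
      rw [dif_pos (by simp), dif_neg (by simp)]
      exact hc (by rw [Fin.lt_def]; simp)
    · exact Or.inl (by omega)
  · unfold oiv
    rw [Nat.le_find_iff]
    intro t ht
    push_neg
    refine ⟨by omega, fun htr => ?_⟩
    unfold fwdA fwdC
    rw [dif_pos (show ((⟨t, by omega⟩ : Fin (r+1)) : ℕ) ≤ vio a c hex by simp; omega),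
      dif_pos (show ((⟨t, htr⟩ : Fin (r-1)) : ℕ) < vio a c hex by simp; omega)]
    exact vio_min a c hex ht (by omega)

lemma bwd_fwdA {a c : Fin r → Fin m} (hc : StrictMono c)
    (hex : ∃ t : ℕ, ∃ h : t < r, c ⟨t, h⟩ < a ⟨t, h⟩) :
    bwdA (fwdA a c hex) (fwdC a c hex) = a := by
  funext j
  unfold bwdA
  simp only [oiv_fwd hc hex]
  by_cases h : (j : ℕ) < vio a c hex
  · rw [dif_pos h]
    unfold fwdC
    rw [dif_pos (by simpa using h)]
  · rw [dif_neg h]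
    unfold fwdA
    rw [dif_neg (by simp; omega)]
    exact congrArg a (Fin.val_injective (by simp))

lemma bwd_fwdC {a c : Fin r → Fin m} (hc : StrictMono c)
    (hex : ∃ t : ℕ, ∃ h : t < r, c ⟨t, h⟩ < a ⟨t, h⟩) :
    bwdC (fwdA a c hex) (fwdC a c hex) = c := by
  funext j
  unfold bwdC
  simp only [oiv_fwd hc hex]
  by_cases h : (j : ℕ) ≤ vio a c hex
  · rw [dif_pos h]
    unfold fwdA
    rw [dif_pos (by simpa using h)]
  · rw [dif_neg h]
    unfold fwdC
    rw [dif_neg (by simp; omega)]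
    exact congrArg c (Fin.val_injective (by simp; omega))

lemma vio_bwd {A : Fin (r+1) → Fin m} {C : Fin (r-1) → Fin m} (hA : StrictMono A)
    (hr : 0 < r)
    (hex : ∃ t : ℕ, ∃ h : t < r, bwdC A C ⟨t, h⟩ < bwdA A C ⟨t, h⟩) :
    vio (bwdA A C) (bwdC A C) hex = oiv A C := by
  have hle : oiv A C ≤ r - 1 := oiv_le A C
  apply le_antisymm
  · unfold vio
    apply Nat.find_le
    refine ⟨by omega, ?_⟩
    unfold bwdA bwdC
    rw [dif_neg (show ¬((⟨oiv A C, by omega⟩ : Fin r) : ℕ) < oiv A C by simp),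
      dif_pos (show ((⟨oiv A C, by omega⟩ : Fin r) : ℕ) ≤ oiv A C by simp)]
    exact hA (by rw [Fin.lt_def]; simp)
  · unfold vio
    rw [Nat.le_find_iff]
    intro t ht
    push_neg
    intro htr
    unfold bwdA bwdC
    rw [dif_pos (show ((⟨t, htr⟩ : Fin r) : ℕ) < oiv A C by simp; omega),
      dif_pos (show ((⟨t, htr⟩ : Fin r) : ℕ) ≤ oiv A C by simp; omega)]
    exact oiv_min A C (by simpa using ht) (by simp; omega)

lemma fwd_bwdA {A : Fin (r+1) → Fin m} {C : Fin (r-1) → Fin m} (hA : StrictMono A)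
    (hr : 0 < r)
    (hex : ∃ t : ℕ, ∃ h : t < r, bwdC A C ⟨t, h⟩ < bwdA A C ⟨t, h⟩) :
    fwdA (bwdA A C) (bwdC A C) hex = A := by
  funext j
  unfold fwdA
  simp only [vio_bwd hA hr hex]
  by_cases h : (j : ℕ) ≤ oiv A C
  · rw [dif_pos h]
    unfold bwdC
    rw [dif_pos (by simpa using h)]
  · rw [dif_neg h]
    unfold bwdA
    rw [dif_neg (by simp; omega)]
    exact congrArg A (Fin.val_injective (by simp; omega))

lemma fwd_bwdC {A : Fin (r+1) → Fin m} {C : Fin (r-1) → Fin m} (hA : StrictMono A)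
    (hr : 0 < r)
    (hex : ∃ t : ℕ, ∃ h : t < r, bwdC A C ⟨t, h⟩ < bwdA A C ⟨t, h⟩) :
    fwdC (bwdA A C) (bwdC A C) hex = C := by
  funext j
  unfold fwdC
  simp only [vio_bwd hA hr hex]
  by_cases h : (j : ℕ) < oiv A C
  · rw [dif_pos h]
    unfold bwdA
    rw [dif_pos (by simpa using h)]
  · rw [dif_neg h]
    unfold bwdC
    rw [dif_neg (by simp; omega)]
    exact congrArg C (Fin.val_injective (by simp))

lemma card_bad (m r : ℕ) (hr : 0 < r) :
    Nat.card {q : (Fin r → Fin m) × (Fin r → Fin m) //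
        (StrictMono q.1 ∧ StrictMono q.2) ∧ ∃ i, q.2 i < q.1 i} =
    m.choose (r+1) * m.choose (r-1) := by
  rw [← card_SM m (r+1), ← card_SM m (r-1), ← Nat.card_prod]
  apply Nat.card_congr
  exact
    { toFun := fun x =>
        (⟨fwdA x.1.1 x.1.2 (hex_of x.2.2), fwdA_mono x.2.1.1 x.2.1.2 _⟩,
         ⟨fwdC x.1.1 x.1.2 (hex_of x.2.2), fwdC_mono x.2.1.1 x.2.1.2 _⟩)
      invFun := fun y =>
        ⟨(bwdA y.1.1 y.2.1, bwdC y.1.1 y.2.1),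
          ⟨bwdA_mono y.1.2 y.2.2, bwdC_mono y.1.2 y.2.2⟩, bwd_bad y.1.1 y.2.1 y.1.2 hr⟩
      left_inv := by
        rintro ⟨⟨a, c⟩, ⟨ha, hc⟩, hbad⟩
        apply Subtype.ext
        refine Prod.ext ?_ ?_
        · exact bwd_fwdA hc (hex_of hbad)
        · exact bwd_fwdC hc (hex_of hbad)
      right_inv := by
        rintro ⟨⟨A, hA⟩, ⟨C, hC⟩⟩
        refine Prod.ext (Subtype.ext ?_) (Subtype.ext ?_)
        · exact fwd_bwdA hA hr _
        · exact fwd_bwdC hA hr _ }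

lemma card_dom (m r : ℕ) (hr : 0 < r) :
    Nat.card {q : (Fin r → Fin m) × (Fin r → Fin m) // DomPair m r q}
      + m.choose (r+1) * m.choose (r-1) = (m.choose r)^2 := by
  rw [← card_bad m r hr]
  have hP : Nat.card {q : (Fin r → Fin m) × (Fin r → Fin m) //
      StrictMono q.1 ∧ StrictMono q.2} = (m.choose r)^2 := by
    rw [Nat.card_congr (Equiv.subtypeProdEquivProd), Nat.card_prod, card_SM]
    exact (sq _).symm
  rw [← hP]
  set β := {q : (Fin r → Fin m) × (Fin r → Fin m) // StrictMono q.1 ∧ StrictMono q.2}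
  classical
  have hsum := Nat.card_sum (α := {x : β // ∀ i, x.1.1 i ≤ x.1.2 i})
    (β := {x : β // ¬ ∀ i, x.1.1 i ≤ x.1.2 i})
  rw [Nat.card_congr (Equiv.sumCompl (fun x : β => ∀ i, x.1.1 i ≤ x.1.2 i)).symm, hsum]
  congr 1
  · apply Nat.card_congr
    refine ((Equiv.subtypeSubtypeEquivSubtypeInter
      (fun q : (Fin r → Fin m) × (Fin r → Fin m) => StrictMono q.1 ∧ StrictMono q.2)
      (fun q => ∀ i, q.1 i ≤ q.2 i)).trans
      (Equiv.subtypeEquivRight (fun q => ?_))).symm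
    constructor
    · rintro ⟨⟨h1, h2⟩, h3⟩; exact ⟨h1, h2, h3⟩
    · rintro ⟨h1, h2, h3⟩; exact ⟨⟨h1, h2⟩, h3⟩
  · apply Nat.card_congr
    refine ((Equiv.subtypeSubtypeEquivSubtypeInter
      (fun q : (Fin r → Fin m) × (Fin r → Fin m) => StrictMono q.1 ∧ StrictMono q.2)
      (fun q => ¬ ∀ i, q.1 i ≤ q.2 i)).trans
      (Equiv.subtypeEquivRight (fun q => ?_))).symm
    constructor
    · rintro ⟨⟨h1, h2⟩, h3⟩
      refine ⟨⟨h1, h2⟩, ?_⟩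
      push_neg at h3
      obtain ⟨i, hi⟩ := h3
      exact ⟨i, hi⟩
    · rintro ⟨⟨h1, h2⟩, i, h3⟩
      exact ⟨⟨h1, h2⟩, by push_neg; exact ⟨i, h3⟩⟩

lemma card_dom_zero (m : ℕ) :
    Nat.card {q : (Fin 0 → Fin m) × (Fin 0 → Fin m) // DomPair m 0 q} = 1 := by
  have : Unique {q : (Fin 0 → Fin m) × (Fin 0 → Fin m) // DomPair m 0 q} :=
    { default := ⟨(fun i => i.elim0, fun i => i.elim0),
        fun i _ _ => i.elim0, fun i _ _ => i.elim0, fun i => i.elim0⟩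
      uniq := by
        rintro ⟨⟨f, g⟩, _⟩
        apply Subtype.ext
        exact Prod.ext (funext fun i => i.elim0) (funext fun i => i.elim0) }
  exact Nat.card_unique

end Reflection2

lemma nara_identity (n k : ℕ) (hk2 : 2 ≤ k) (hkn : k ≤ n) :
    n.choose k * n.choose (k-1) + n * ((n-1).choose k * (n-1).choose (k-2)) =
      n * ((n-1).choose (k-1) * (n-1).choose (k-1)) := by
  obtain ⟨j, rfl⟩ : ∃ j, k = j + 2 := ⟨k - 2, by omega⟩
  obtain ⟨d, rfl⟩ : ∃ d, n = j + 2 + d := ⟨n - (j+2), by omega⟩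
  have e1 : j + 2 + d - 1 = j + 1 + d := by omega
  have e2 : j + 2 - 1 = j + 1 := by omega
  have e3 : j + 2 - 2 = j := by omega
  rw [e1, e2, e3]
  set x := (j + 1 + d).choose (j+1) with hx
  set y := (j + 1 + d).choose j with hy
  set z := (j + 1 + d).choose (j+2) with hz
  have h1 : z * (j+2) = x * d := by
    have := Nat.choose_succ_right_eq (j+1+d) (j+1)
    simpa [hx, hz, show j+1+1 = j+2 from rfl, show j+1+d - (j+1) = d by omega] using this
  have h2 : x * (j+1) = y * (d+1) := by
    have := Nat.choose_succ_right_eq (j+1+d) j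
    simpa [hx, hy, show j+1+d - j = d+1 by omega] using this
  have hp1 : (j+2+d).choose (j+2) = x + z := by
    have := Nat.choose_succ_succ (j+1+d) (j+1)
    simpa [hx, hz, show j+1+d+1 = j+2+d by omega, show j+1+1 = j+2 from rfl] using this
  have hp2 : (j+2+d).choose (j+1) = y + x := by
    have := Nat.choose_succ_succ (j+1+d) j
    simpa [hx, hy, show j+1+d+1 = j+2+d by omega] using this
  rw [hp1, hp2]
  apply Nat.eq_of_mul_eq_mul_left (show 0 < (d+1)*(j+2) by positivity)
  have h1' : (z : ℤ) * (j+2) = (x : ℤ) * d := by exact_mod_cast h1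
  have h2' : (x : ℤ) * (j+1) = (y : ℤ) * (d+1) := by exact_mod_cast h2
  zify
  linear_combination ((d+1)*((x : ℤ) + (j+d+3)*y)) * h1' - ((d*(j+d+3)+(j+2))*(x : ℤ)) * h2'



/-- The number of 132-avoiding permutations of length `n` with exactly `k`
left-to-right minima is the Narayana number `(1/n)·C(n,k)·C(n,k-1)`. -/
theorem narayana_count_132 (n k : ℕ) (hk : 1 ≤ k) (hkn : k ≤ n) :
    n * Nat.card {π : Equiv.Perm (Fin n) //
        Avoids132 π ∧ Nat.card {i : Fin n // IsLRMin π i} = k} =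
      n.choose k * n.choose (k - 1) := by

  have hn : 0 < n := lt_of_lt_of_le hk hkn
  have hcard1 := Nat.card_eq_of_bijective _ (toGP_bijective (n := n) (k := k) hn)
  have hcard2 := Nat.card_eq_of_bijective _ (gpToDP_bijective (n := n) (k := k) hn hk)
  rw [hcard1, hcard2]
  rcases eq_or_lt_of_le hk with h1 | h1
  · subst h1
    rw [show (1:ℕ) - 1 = 0 from rfl, card_dom_zero]
    simp [Nat.choose_one_right]
  · have hk2 : 2 ≤ k := h1
    have hdom := card_dom (n-1) (k-1) (by omega)
    have hid := nara_identity n k hk2 hkn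
    rw [show k - 1 + 1 = k by omega, show k - 1 - 1 = k - 2 by omega] at hdom
    have key : n * Nat.card {q : (Fin (k-1) → Fin (n-1)) × (Fin (k-1) → Fin (n-1)) //
          DomPair (n-1) (k-1) q} + n * ((n-1).choose k * (n-1).choose (k-2)) =
        n.choose k * n.choose (k-1) + n * ((n-1).choose k * (n-1).choose (k-2)) := by
      calc n * Nat.card {q : (Fin (k-1) → Fin (n-1)) × (Fin (k-1) → Fin (n-1)) //
            DomPair (n-1) (k-1) q} + n * ((n-1).choose k * (n-1).choose (k-2))
          = n * (Nat.card {q : (Fin (k-1) → Fin (n-1)) × (Fin (k-1) → Fin (n-1)) //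
            DomPair (n-1) (k-1) q} + (n-1).choose k * (n-1).choose (k-2)) := by ring
        _ = n * ((n-1).choose (k-1))^2 := by rw [hdom]
        _ = n * ((n-1).choose (k-1) * (n-1).choose (k-1)) := by rw [pow_two]
        _ = n.choose k * n.choose (k-1) + n * ((n-1).choose k * (n-1).choose (k-2)) := hid.symm
    exact Nat.add_right_cancel key
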